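/- Let U : ℝ → ℝ^N be absolutely continuous with U_x ∈ L², satisfying U(x) → a⁻ as x → -∞ and U(x) → a⁺ as x → +∞. Assume W : ℝ^N → ℝ is continuous, nonnegative, and let α > 0 be such that the sublevel set {W ≤ α} is the disjoint union of two sets K⁻ ∋ a⁻ and K⁺ ∋ a⁺ with d_α := dist(K⁻, K⁺) > 0. Suppose Λ^α := {x : W(U(x)) ≥ α} is a bounded interval [λ⁻, λ⁺]. Then E(U) = ∫_ℝ { ½|U_x|² + W(U) } dx ≥ d_α²/(2(λ⁺ - λ⁻)) + α(λ⁺ - λ⁻). -/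

import Mathlib

open MeasureTheory Filter

set_option maxHeartbeats 1000000 in
theorem stmt_5 {N : ℕ} (W : EuclideanSpace ℝ (Fin N) → ℝ)
    (U U' : ℝ → EuclideanSpace ℝ (Fin N))
    (am ap : EuclideanSpace ℝ (Fin N))
    (hderiv : ∀ x, HasDerivAt U (U' x) x)
    (hU'int : Integrable (fun x => ‖U' x‖ ^ 2))
    (hlimm : Tendsto U atBot (nhds am))
    (hlimp : Tendsto U atTop (nhds ap))
    (hW : Continuous W) (hWnn : ∀ u, 0 ≤ W u)
    (α : ℝ) (hα : 0 < α)
    (Km Kp : Set (EuclideanSpace ℝ (Fin N)))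
    (hsub : {u | W u ≤ α} = Km ∪ Kp) (hdisj : Disjoint Km Kp)
    (ham : am ∈ Km) (hap : ap ∈ Kp)
    (dα : ℝ) (hdα : 0 < dα)
    (hdist : ∀ x ∈ Km, ∀ y ∈ Kp, dα ≤ dist x y)
    (lm lp : ℝ) (hlt : lm < lp)
    (hΛ : {x : ℝ | α ≤ W (U x)} = Set.Icc lm lp)
    (hEint : Integrable (fun x => (1 : ℝ) / 2 * ‖U' x‖ ^ 2 + W (U x))) :
    dα ^ 2 / (2 * (lp - lm)) + α * (lp - lm) ≤
      ∫ x : ℝ, ((1 : ℝ) / 2 * ‖U' x‖ ^ 2 + W (U x)) := by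
  have hLpos : (0 : ℝ) < lp - lm := sub_pos.mpr hlt
  have contU : Continuous U := by
    rw [continuous_iff_continuousAt]
    exact fun x => (hderiv x).continuousAt
  -- distances between closures
  have hCdist : ∀ x ∈ closure Km, ∀ y ∈ closure Kp, dα ≤ dist x y := by
    intro x hx y hy
    refine le_of_forall_pos_le_add ?_
    intro ε hε
    obtain ⟨x', hx', hxx'⟩ := Metric.mem_closure_iff.mp hx (ε / 2) (by linarith)
    obtain ⟨y', hy', hyy'⟩ := Metric.mem_closure_iff.mp hy (ε / 2) (by linarith)
    have h1 := hdist x' hx' y' hy'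
    have h2 : dist x' y' ≤ dist x' x + dist x y + dist y y' := by
      have a1 := dist_triangle x' y y'
      have a2 := dist_triangle x' x y
      linarith
    have e1 : dist x' x = dist x x' := dist_comm _ _
    linarith
  -- membership of endpoints in closures
  have hmemCmCp : ∀ x : ℝ, x ∉ Set.Icc lm lp → U x ∈ closure Km ∪ closure Kp := by
    intro x hx
    have : W (U x) ≤ α := by
      by_contra h
      exact hx (hΛ ▸ (le_of_lt (not_le.mp h) : α ≤ W (U x)))
    have : U x ∈ Km ∪ Kp := hsub ▸ this
    exact this.imp (fun h => subset_closure h) (fun h => subset_closure h)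
  -- U '' Iio lm ⊆ closure Km
  have key : ∀ (l : ℝ) (K K' : Set (EuclideanSpace ℝ (Fin N))) (s : Set ℝ)
      (a : EuclideanSpace ℝ (Fin N)) (hK : a ∈ K)
      (hd' : ∀ x ∈ closure K, ∀ y ∈ closure K', dα ≤ dist x y)
      (hps : IsPreconnected s) (hcl : l ∈ closure s)
      (hss : ∀ x ∈ s, U x ∈ closure K ∪ closure K')
      (hne : ∃ x ∈ s, U x ∈ closure K), U l ∈ closure K := by
    intro l K K' s a hK hd' hps hcl hss hne
    have himage : U '' s ⊆ closure K := by
      by_contra hcon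
      obtain ⟨z, hzs, hz⟩ : ∃ z ∈ U '' s, z ∉ closure K := by
        simpa [Set.subset_def] using hcon
      have hpre : IsPreconnected (U '' s) := hps.image U contU.continuousOn
      have h1 : (U '' s) ⊆ (closure K')ᶜ ∪ (closure K)ᶜ := by
        rintro w ⟨x, hx, rfl⟩
        rcases hss x hx with h | h
        · left
          intro hw
          have := hd' _ h _ hw
          simp at this
          linarith
        · right
          intro hw
          have := hd' _ hw _ h
          simp at this
          linarith
      obtain ⟨x0, hx0s, hx0⟩ := hne
      have h2 : ((U '' s) ∩ (closure K')ᶜ).Nonempty := by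
        refine ⟨U x0, ⟨Set.mem_image_of_mem U hx0s, ?_⟩⟩
        intro hw
        have := hd' _ hx0 _ hw
        simp at this
        linarith
      have h3 : ((U '' s) ∩ (closure K)ᶜ).Nonempty := ⟨z, hzs, hz⟩
      obtain ⟨w, hws, hw1, hw2⟩ := hpre _ _ (isClosed_closure.isOpen_compl)
        (isClosed_closure.isOpen_compl) h1 h2 h3
      obtain ⟨x, hx, rfl⟩ := hws
      rcases hss x hx with h | h
      · exact hw2 h
      · exact hw1 h
    have : U l ∈ closure (U '' s) :=
      (contU.continuousWithinAt).mem_closure_image hcl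
    exact closure_minimal himage isClosed_closure this
  have hUlm : U lm ∈ closure Km := by
    refine key lm Km Kp (Set.Iio lm) am ham hCdist isPreconnected_Iio
      (by rw [closure_Iio]; exact Set.self_mem_Iic) ?_ ?_
    · intro x hx
      exact hmemCmCp x (fun hc => absurd hc.1 (not_le.mpr hx))
    · have h1 : ∀ᶠ x in atBot, dist (U x) am < dα :=
        hlimm (Metric.ball_mem_nhds am hdα)
      have h2 : ∀ᶠ x in (atBot : Filter ℝ), x < lm := eventually_lt_atBot lm
      obtain ⟨x, hx1, hx2⟩ := (h1.and h2).exists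
      refine ⟨x, hx2, ?_⟩
      rcases hmemCmCp x (fun hc => absurd hc.1 (not_le.mpr hx2)) with h | h
      · exact h
      · exfalso
        have := hCdist am (subset_closure ham) _ h
        rw [dist_comm] at hx1
        linarith
  have hdistKpKm : ∀ x ∈ closure Kp, ∀ y ∈ closure Km, dα ≤ dist x y := by
    intro x hx y hy
    rw [dist_comm]
    exact hCdist y hy x hx
  have hUlp : U lp ∈ closure Kp := by
    refine key lp Kp Km (Set.Ioi lp) ap hap hdistKpKm isPreconnected_Ioi
      (by rw [closure_Ioi]; exact Set.self_mem_Ici) ?_ ?_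
    · intro x hx
      exact (hmemCmCp x (fun hc => absurd hc.2 (not_le.mpr hx))).symm
    · have h1 : ∀ᶠ x in atTop, dist (U x) ap < dα :=
        hlimp (Metric.ball_mem_nhds ap hdα)
      have h2 : ∀ᶠ x in (atTop : Filter ℝ), lp < x := eventually_gt_atTop lp
      obtain ⟨x, hx1, hx2⟩ := (h1.and h2).exists
      refine ⟨x, hx2, ?_⟩
      rcases hmemCmCp x (fun hc => absurd hc.2 (not_le.mpr hx2)) with h | h
      · exfalso
        have := hCdist _ h ap (subset_closure hap)
        linarith
      · exact h
  have hdUU : dα ≤ ‖U lp - U lm‖ := by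
    have := hCdist _ hUlm _ hUlp
    rwa [dist_eq_norm, norm_sub_rev] at this
  -- measurability / integrability of U'
  have hU'eq : U' = deriv U := funext fun x => ((hderiv x).deriv).symm
  have hU'sm : StronglyMeasurable U' := hU'eq ▸ stronglyMeasurable_deriv U
  have hIntOn : IntegrableOn U' (Set.Icc lm lp) := by
    refine Integrable.mono' ((integrable_const (1:ℝ)).add
      (hU'int.integrableOn)) hU'sm.aestronglyMeasurable.restrict
      (Filter.Eventually.of_forall fun x => ?_)
    rcases le_or_gt ‖U' x‖ 1 with h | h
    · have : (0:ℝ) ≤ ‖U' x‖ ^ 2 := sq_nonneg _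
      simp only [Pi.add_apply]
      linarith
    · have : ‖U' x‖ ≤ ‖U' x‖ ^ 2 := by nlinarith
      simp only [Pi.add_apply]
      linarith
  -- FTC
  have hftc : ∫ x in lm..lp, U' x = U lp - U lm := by
    refine intervalIntegral.integral_eq_sub_of_hasDerivAt
      (fun x _ => hderiv x) ?_
    rw [intervalIntegrable_iff_integrableOn_Icc_of_le hlt.le]
    exact hIntOn
  set I := ∫ x in Set.Icc lm lp, ‖U' x‖ ^ 2 with hIdef
  set D := ∫ x in Set.Icc lm lp, ‖U' x‖ with hDdef
  have hD : dα ≤ D := by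
    have h1 : ‖∫ x in lm..lp, U' x‖ ≤ ∫ x in lm..lp, ‖U' x‖ :=
      intervalIntegral.norm_integral_le_integral_norm hlt.le
    rw [hftc] at h1
    have h2 : ∫ x in lm..lp, ‖U' x‖ = D := by
      rw [intervalIntegral.integral_of_le hlt.le, hDdef,
        MeasureTheory.integral_Icc_eq_integral_Ioc]
    linarith [hdUU]
  have hInn : (0:ℝ) ≤ I := setIntegral_nonneg measurableSet_Icc
    (fun x _ => sq_nonneg _)
  have hIsqInt : IntegrableOn (fun x => ‖U' x‖ ^ 2) (Set.Icc lm lp) :=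
    hU'int.integrableOn
  have hvol : (volume (Set.Icc lm lp)).toReal = lp - lm := by
    rw [Real.volume_Icc, ENNReal.toReal_ofReal hLpos.le]
  -- Cauchy-Schwarz via AM-GM
  have hkey : ∀ t : ℝ, 0 < t → D ≤ t / 2 * I + (lp - lm) / (2 * t) := by
    intro t ht
    have hle : D ≤ ∫ x in Set.Icc lm lp, (t / 2 * ‖U' x‖ ^ 2 + 1 / (2 * t)) := by
      refine setIntegral_mono_on hIntOn.norm
        ((hIsqInt.const_mul _).add ((integrableOn_const_iff).mpr
          (Or.inr (by rw [Real.volume_Icc]; exact ENNReal.ofReal_lt_top))))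
        measurableSet_Icc (fun x _ => ?_)
      have hnum : t / 2 * ‖U' x‖ ^ 2 + 1 / (2 * t) - ‖U' x‖
          = (t * ‖U' x‖ - 1) ^ 2 / (2 * t) := by
        field_simp
        ring
      have hnn2 : (0:ℝ) ≤ (t * ‖U' x‖ - 1) ^ 2 / (2 * t) :=
        div_nonneg (sq_nonneg _) (by linarith)
      linarith
    have heq : ∫ x in Set.Icc lm lp, (t / 2 * ‖U' x‖ ^ 2 + 1 / (2 * t))
        = t / 2 * I + (lp - lm) / (2 * t) := by
      rw [integral_add (hIsqInt.const_mul _) ((integrableOn_const_iff).mpr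
          (Or.inr (by rw [Real.volume_Icc]; exact ENNReal.ofReal_lt_top))),
        integral_const_mul, setIntegral_const, measureReal_def, hvol, smul_eq_mul]
      ring
    rw [heq] at hle
    exact hle
  have hkey2 : ∀ t : ℝ, 0 < t → 2 * t * D ≤ t ^ 2 * I + (lp - lm) := by
    intro t ht
    have h := hkey t ht
    have e : t / 2 * I + (lp - lm) / (2 * t) = (t ^ 2 * I + (lp - lm)) / (2 * t) := by
      field_simp
    rw [e] at h
    have := (le_div_iff₀ (by linarith : (0:ℝ) < 2 * t)).mp h
    nlinarith
  have hCS : dα ^ 2 ≤ (lp - lm) * I := by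
    rcases eq_or_lt_of_le hInn with h0 | hIpos
    · exfalso
      have ht : 0 < (lp - lm) / dα := div_pos hLpos hdα
      have h := hkey2 _ ht
      rw [← h0] at h
      have e : (lp - lm) / dα * dα = lp - lm := div_mul_cancel₀ _ hdα.ne'
      have h2 := mul_le_mul_of_nonneg_left hD (by linarith : (0:ℝ) ≤ 2 * ((lp - lm) / dα))
      nlinarith
    · have ht : 0 < dα / I := div_pos hdα hIpos
      have h := hkey2 _ ht
      have e1 : (dα / I) ^ 2 * I = dα ^ 2 / I := by
        field_simp
      have e2 : 2 * (dα / I) * dα = 2 * (dα ^ 2 / I) := by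
        rw [sq]
        field_simp
      have h2 := mul_le_mul_of_nonneg_left hD (by linarith : (0:ℝ) ≤ 2 * (dα / I))
      have h6 : dα ^ 2 / I ≤ lp - lm := by nlinarith
      rw [div_le_iff₀ hIpos] at h6
      nlinarith
  -- lower bound for the W integral
  have hWint : IntegrableOn (fun x => W (U x)) (Set.Icc lm lp) :=
    (hW.comp contU).integrableOn_Icc
  have hJ : α * (lp - lm) ≤ ∫ x in Set.Icc lm lp, W (U x) := by
    have hmo : ∀ x ∈ Set.Icc lm lp, (fun _ : ℝ => α) x ≤ W (U x) := by
      intro x hx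
      have hx' : x ∈ {x : ℝ | α ≤ W (U x)} := hΛ ▸ hx
      exact hx'
    have h := setIntegral_mono_on ((integrableOn_const_iff).mpr
        (Or.inr (by rw [Real.volume_Icc]; exact ENNReal.ofReal_lt_top)))
      hWint measurableSet_Icc hmo
    rwa [setIntegral_const, measureReal_def, hvol, smul_eq_mul, mul_comm] at h
  -- combine
  have hsplit : ∫ x in Set.Icc lm lp, ((1 : ℝ) / 2 * ‖U' x‖ ^ 2 + W (U x))
      = 1 / 2 * I + ∫ x in Set.Icc lm lp, W (U x) := by
    rw [integral_add (hIsqInt.const_mul _) hWint, integral_const_mul]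
  have hnn : 0 ≤ᵐ[volume] fun x => (1 : ℝ) / 2 * ‖U' x‖ ^ 2 + W (U x) := by
    refine Filter.Eventually.of_forall fun x => ?_
    have := hWnn (U x)
    positivity
  have hmono : ∫ x in Set.Icc lm lp, ((1 : ℝ) / 2 * ‖U' x‖ ^ 2 + W (U x))
      ≤ ∫ x : ℝ, ((1 : ℝ) / 2 * ‖U' x‖ ^ 2 + W (U x)) :=
    setIntegral_le_integral hEint hnn
  have hfin : dα ^ 2 / (2 * (lp - lm)) ≤ 1 / 2 * I := by
    rw [div_le_iff₀ (by positivity)]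
    nlinarith
  linarith [hmono, hsplit, hJ, hfin]
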